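/- Let f : ℝ^n → ℝ be differentiable with L-Lipschitz gradient and m-semiconvex, K ∈ ℝ^{n×n} with σ = σ_min(KᵀK) > 0, ρ > 0, and fix β, λ ∈ ℝ^n. If α⁺ minimizes α ↦ f(α) + ⟨λ, Kα - β⟩ + (ρ/2)‖Kα - β‖², then for any α: f(α⁺) + ⟨λ, Kα⁺ - β⟩ + (ρ/2)‖Kα⁺ - β‖² - (f(α) + ⟨λ, Kα - β⟩ + (ρ/2)‖Kα - β‖²) ≤ ((m - ρσ)/2)‖α⁺ - α‖². -/

import Mathlib

open Matrix RealInnerProductSpace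

set_option maxHeartbeats 1000000 in
/-- Descent estimate for the `α`-block of the discrete-continuous augmented Lagrangian:
if `α⁺` minimizes `α ↦ f(α) + ⟨λ, Kα - β⟩ + (ρ/2)‖Kα - β‖²`, then for any `α` the decrease
is at most `((m - ρσ)/2)‖α⁺ - α‖²`. -/
theorem alpha_block_descent (n : ℕ) (hn : 0 < n) (f : EuclideanSpace ℝ (Fin n) → ℝ)
    (L m : ℝ) (hL0 : 0 ≤ L) (hm : 0 < m) (hf : Differentiable ℝ f)
    (hLip : LipschitzWith (Real.toNNReal L) (fun x => gradient f x))
    (hsc : ConvexOn ℝ Set.univ (fun x => f x + (m / 2) * ‖x‖ ^ 2))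
    (K : Matrix (Fin n) (Fin n) ℝ) (hH : (Kᵀ * K).IsHermitian) (σ : ℝ)
    (hσ : σ = ⨅ i, hH.eigenvalues i) (hσpos : 0 < σ)
    (ρ : ℝ) (hρ : 0 < ρ) (β lam : EuclideanSpace ℝ (Fin n))
    (αplus : EuclideanSpace ℝ (Fin n))
    (hαplus : ∀ α : EuclideanSpace ℝ (Fin n),
      f αplus + ⟪lam, Matrix.toEuclideanLin K αplus - β⟫
          + (ρ / 2) * ‖Matrix.toEuclideanLin K αplus - β‖ ^ 2
        ≤ f α + ⟪lam, Matrix.toEuclideanLin K α - β⟫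
          + (ρ / 2) * ‖Matrix.toEuclideanLin K α - β‖ ^ 2) :
    ∀ α : EuclideanSpace ℝ (Fin n),
      f αplus + ⟪lam, Matrix.toEuclideanLin K αplus - β⟫
          + (ρ / 2) * ‖Matrix.toEuclideanLin K αplus - β‖ ^ 2
        - (f α + ⟪lam, Matrix.toEuclideanLin K α - β⟫
          + (ρ / 2) * ‖Matrix.toEuclideanLin K α - β‖ ^ 2)
      ≤ ((m - ρ * σ) / 2) * ‖αplus - α‖ ^ 2 := by
  intro α
  set T : EuclideanSpace ℝ (Fin n) →ₗ[ℝ] EuclideanSpace ℝ (Fin n) :=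
    Matrix.toEuclideanLin K with hT
  -- Step A: Rayleigh-type lower bound
  have hq : ∀ z : EuclideanSpace ℝ (Fin n), σ * ‖z‖ ^ 2 ≤ ‖T z‖ ^ 2 := by
    intro z
    set B := Matrix.toEuclideanLin (Kᵀ * K) with hB
    have hsym : B.IsSymmetric := (Matrix.isHermitian_iff_isSymmetric).1 hH
    have hBTz : ∀ w, B w = Matrix.toEuclideanLin Kᵀ (T w) := by
      intro w
      simp only [hB, hT, Matrix.toEuclideanLin_apply]
      ext i
      simp [Matrix.mulVec_mulVec]
    have key1 : ⟪B z, z⟫ = ‖T z‖ ^ 2 := by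
      rw [hBTz, ← Matrix.conjTranspose_eq_transpose_of_trivial,
        Matrix.toEuclideanLin_conjTranspose_eq_adjoint, LinearMap.adjoint_inner_left,
        real_inner_self_eq_norm_sq]
    rw [← key1]
    set b := hH.eigenvectorBasis with hb
    set μ := hH.eigenvalues with hμ
    have heig : ∀ j, B (b j) = μ j • b j := by
      intro j
      have h0 := hH.mulVec_eigenvectorBasis j
      ext i
      simp only [hB, Matrix.toEuclideanLin_apply]
      calc ((Kᵀ * K) *ᵥ ⇑(b j)) i = (μ j • ⇑(b j)) i := by rw [h0]
      _ = (μ j • b j) i := rfl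
    have hσle : ∀ j, σ ≤ μ j := fun j => hσ ▸ ciInf_le (Finite.bddBelow_range _) j
    have e1 : ⟪B z, z⟫ = ∑ j, μ j * ⟪b j, z⟫ ^ 2 := by
      rw [← b.sum_inner_mul_inner (B z) z]
      refine Finset.sum_congr rfl fun j _ => ?_
      rw [hsym, heig, real_inner_smul_right]
      ring_nf
      rw [real_inner_comm z (b j)]
      ring
    have e2 : ‖z‖ ^ 2 = ∑ j, ⟪b j, z⟫ ^ 2 := by
      rw [← real_inner_self_eq_norm_sq, ← b.sum_inner_mul_inner z z]
      refine Finset.sum_congr rfl fun j _ => ?_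
      rw [real_inner_comm z (b j)]; ring
    rw [e1, e2, Finset.mul_sum]
    exact Finset.sum_le_sum fun j _ => mul_le_mul_of_nonneg_right (hσle j) (sq_nonneg _)
  -- objective and its shifted convexification
  set cc := (m - ρ * σ) / 2 with hcc
  set g : EuclideanSpace ℝ (Fin n) → ℝ :=
    fun x => f x + ⟪lam, T x - β⟫ + (ρ / 2) * ‖T x - β‖ ^ 2 with hgdef
  set h : EuclideanSpace ℝ (Fin n) → ℝ := fun x => g x + cc * ‖x‖ ^ 2 with hhdef
  -- expansion of squared norms of combinations
  have sq_expand : ∀ (u w : EuclideanSpace ℝ (Fin n)) (a b : ℝ),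
      ‖a • u + b • w‖ ^ 2 = a ^ 2 * ‖u‖ ^ 2 + 2 * (a * b) * ⟪u, w⟫ + b ^ 2 * ‖w‖ ^ 2 := by
    intro u w a b
    rw [← real_inner_self_eq_norm_sq, ← real_inner_self_eq_norm_sq,
      ← real_inner_self_eq_norm_sq]
    simp only [inner_add_left, inner_add_right, real_inner_smul_left, real_inner_smul_right]
    rw [real_inner_comm w u]
    ring
  -- Step B: convexity of h
  have qconv : ConvexOn ℝ Set.univ
      (fun x : EuclideanSpace ℝ (Fin n) => ‖T x‖ ^ 2 - σ * ‖x‖ ^ 2) := by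
    refine ⟨convex_univ, fun x _ y _ a b ha hb hab => ?_⟩
    have h1 := hq (x - y)
    have e1 : ‖T (x - y)‖ ^ 2 = ‖T x‖ ^ 2 - 2 * ⟪T x, T y⟫ + ‖T y‖ ^ 2 := by
      rw [map_sub]; exact norm_sub_sq_real _ _
    have e2 : ‖x - y‖ ^ 2 = ‖x‖ ^ 2 - 2 * ⟪x, y⟫ + ‖y‖ ^ 2 := norm_sub_sq_real _ _
    have e3 : ‖T (a • x + b • y)‖ ^ 2
        = a ^ 2 * ‖T x‖ ^ 2 + 2 * (a * b) * ⟪T x, T y⟫ + b ^ 2 * ‖T y‖ ^ 2 := by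
      rw [map_add, LinearMap.map_smul, LinearMap.map_smul]
      exact sq_expand _ _ _ _
    have key : 0 ≤ a * b * ((‖T x‖ ^ 2 - 2 * ⟪T x, T y⟫ + ‖T y‖ ^ 2)
        - σ * (‖x‖ ^ 2 - 2 * ⟪x, y⟫ + ‖y‖ ^ 2)) := by
      apply mul_nonneg (mul_nonneg ha hb)
      nlinarith [h1]
    simp only [smul_eq_mul]
    rw [e3, sq_expand]
    have hb1 : b = 1 - a := by linarith
    subst hb1
    nlinarith [key]
  have linconv : ConvexOn ℝ Set.univ
      (fun x : EuclideanSpace ℝ (Fin n) =>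
        (((innerSL ℝ (lam - ρ • β)).toLinearMap.comp T) x : ℝ)) :=
    LinearMap.convexOn _ convex_univ
  have constconv : ConvexOn ℝ Set.univ
      (fun _ : EuclideanSpace ℝ (Fin n) => (ρ / 2) * ‖β‖ ^ 2 - ⟪lam, β⟫) :=
    convexOn_const _ convex_univ
  have hsum := ((hsc.add (qconv.smul (by positivity : (0:ℝ) ≤ ρ / 2))).add linconv).add constconv
  have hhe : h = fun x =>
      ((f x + m / 2 * ‖x‖ ^ 2) + (ρ / 2) • (‖T x‖ ^ 2 - σ * ‖x‖ ^ 2)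
        + (((innerSL ℝ (lam - ρ • β)).toLinearMap.comp T) x : ℝ))
      + ((ρ / 2) * ‖β‖ ^ 2 - ⟪lam, β⟫) := by
    funext x
    simp only [hhdef, hgdef, hcc, smul_eq_mul, LinearMap.coe_comp, Function.comp_apply,
      ContinuousLinearMap.coe_coe, innerSL_apply_apply, inner_sub_left, inner_sub_right,
      real_inner_smul_left]
    rw [norm_sub_sq_real (T x) β, real_inner_comm (T x) β]
    ring
  have hconv : ConvexOn ℝ Set.univ h := by rw [hhe]; exact hsum
  -- Step C: zero derivative at the minimizer
  have hTd : Differentiable ℝ (fun x : EuclideanSpace ℝ (Fin n) => T x) :=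
    (LinearMap.toContinuousLinearMap T).differentiable
  have hgd : Differentiable ℝ g := by
    apply Differentiable.add
    · exact hf.add ((differentiable_const lam).inner ℝ (hTd.sub_const β))
    · exact ((hTd.sub_const β).norm_sq ℝ).const_mul _
  have hmin : IsLocalMin g αplus :=
    Filter.Eventually.of_forall fun x => by simpa [hgdef] using hαplus x
  have hg0 : fderiv ℝ g αplus = 0 := hmin.fderiv_eq_zero
  have hgf : HasFDerivAt g (0 : EuclideanSpace ℝ (Fin n) →L[ℝ] ℝ) αplus :=
    hg0 ▸ (hgd αplus).hasFDerivAt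
  -- Step D: convexity inequality along the segment
  set v := α - αplus with hv
  have hγ : HasDerivAt (fun t : ℝ => t • v + αplus) v 0 := by
    simpa using ((hasDerivAt_id (0 : ℝ)).smul_const v).add_const αplus
  have hγ0 : (0 : ℝ) • v + αplus = αplus := by simp
  have φ1 : HasDerivAt (fun t : ℝ => g (t • v + αplus)) 0 0 := by
    have h2 : HasFDerivAt g (0 : EuclideanSpace ℝ (Fin n) →L[ℝ] ℝ) ((0:ℝ) • v + αplus) := by
      rw [hγ0]; exact hgf
    have := h2.comp_hasDerivAt 0 hγ
    simpa [Function.comp_def] using this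
  have φ2 : HasDerivAt (fun t : ℝ => cc * ‖t • v + αplus‖ ^ 2) (cc * (2 * ⟪αplus, v⟫)) 0 := by
    have := (hγ.norm_sq).const_mul cc
    simpa using this
  have φder : HasDerivAt (fun t : ℝ => h (t • v + αplus)) (cc * (2 * ⟪αplus, v⟫)) 0 := by
    have := φ1.add φ2
    rw [zero_add] at this; exact this
  have φconv : ConvexOn ℝ Set.univ (fun t : ℝ => h (t • v + αplus)) := by
    have h1 := hconv.comp_affineMap (AffineMap.lineMap αplus α : ℝ →ᵃ[ℝ] _)
    have hfe : (fun t : ℝ => h (t • v + αplus))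
        = fun t : ℝ => h ((1 - t) • αplus + t • α) := by
      funext t
      exact congrArg h (by rw [hv, smul_sub, sub_smul, one_smul]; abel)
    rw [hfe]
    simpa [Function.comp_def, AffineMap.lineMap_apply_module, hv] using h1
  have hkey : cc * (2 * ⟪αplus, v⟫) ≤ slope (fun t : ℝ => h (t • v + αplus)) 0 1 :=
    φconv.le_slope_of_hasDerivAt (Set.mem_univ 0) (Set.mem_univ 1) one_pos φder
  have hslope : slope (fun t : ℝ => h (t • v + αplus)) 0 1 = h α - h αplus := by
    have h1 : v + αplus = α := by rw [hv]; abel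
    simp [slope_def_field, hγ0, h1]
  rw [hslope] at hkey
  -- assemble
  have hfin : g αplus - g α ≤ cc * ‖αplus - α‖ ^ 2 := by
    have e5 : ‖αplus - α‖ ^ 2 = ‖αplus‖ ^ 2 - 2 * ⟪αplus, α⟫ + ‖α‖ ^ 2 := norm_sub_sq_real _ _
    have e6 : ⟪αplus, v⟫ = ⟪αplus, α⟫ - ‖αplus‖ ^ 2 := by
      rw [hv, inner_sub_right, real_inner_self_eq_norm_sq]
    simp only [hhdef] at hkey
    have e7 : cc * (2 * ⟪αplus, v⟫) = cc * (2 * ⟪αplus, α⟫) - cc * (2 * ‖αplus‖ ^ 2) := by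
      rw [e6]; ring
    have e8 : cc * ‖αplus - α‖ ^ 2
        = cc * ‖αplus‖ ^ 2 - cc * (2 * ⟪αplus, α⟫) + cc * ‖α‖ ^ 2 := by
      rw [e5]; ring
    linarith [hkey, e7, e8]
  exact hfin
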